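/- Let Â be the completion of a graded associative ℚ-algebra A = ⊕ₙ≥0 Aₙ with A₀ = ℚ, and let (ζ_k)_{k≥1} be elements with ζ_k ∈ A_k. Define P := (exp(ζ₁)exp(ζ₂)exp(ζ₃)⋯)·(⋯exp(ζ₃)exp(ζ₂)exp(ζ₁)) ∈ Â. Suppose the substitution a ↦ (−1)^{deg a}·a (extended to Â) sends P to P^{−1}. Then ζ_{2m} = 0 for all m ≥ 1. -/

import Mathlib

/- The completion `Â` of a graded associative ℚ-algebra with `A₀ = ℚ` is
modeled as power series over a ℚ-algebra `R`, the variable `t` recording the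
degree; a homogeneous element of degree `k` is `c · tᵏ` with `c : R`. -/

/-- The formal exponential `exp (c · tᵏ) = ∑ⱼ cʲ tᵏʲ / j!` (for `k ≥ 1`). -/
noncomputable def expPow {R : Type*} [Ring R] [Algebra ℚ R] (k : ℕ) (c : R) :
    PowerSeries R :=
  PowerSeries.mk fun m =>
    if k ∣ m then (algebraMap ℚ R (((m / k).factorial : ℚ)⁻¹)) * c ^ (m / k) else 0

/-- Partial ordered product `exp(ζ₁ t) exp(ζ₂ t²) ⋯ exp(ζ_N t^N)` (increasing). -/
noncomputable def zassUp {R : Type*} [Ring R] [Algebra ℚ R] (ζ : ℕ → R) (N : ℕ) :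
    PowerSeries R :=
  ((List.range N).map (fun k => expPow (k + 1) (ζ (k + 1)))).prod

/-- Partial ordered product `exp(ζ_N t^N) ⋯ exp(ζ₂ t²) exp(ζ₁ t)` (decreasing). -/
noncomputable def zassDown {R : Type*} [Ring R] [Algebra ℚ R] (ζ : ℕ → R) (N : ℕ) :
    PowerSeries R :=
  (((List.range N).reverse).map (fun k => expPow (k + 1) (ζ (k + 1)))).prod

/-- The sign involution `a ↦ (-1)^{deg a} a`, i.e. `t ↦ -t`. -/
noncomputable def negSub {R : Type*} [Ring R] (f : PowerSeries R) : PowerSeries R :=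
  PowerSeries.mk fun n => (-1 : R) ^ n * PowerSeries.coeff n f

set_option linter.unusedSectionVars false

section
variable {R : Type*} [Ring R] [Algebra ℚ R]

lemma algC (r : ℚ) (x : R) : x * algebraMap ℚ R r = algebraMap ℚ R r * x :=
  (Algebra.commutes r x).symm

lemma negOnePowC (i : ℕ) (x : R) : ((-1 : R)) ^ i * x = x * (-1 : R) ^ i := by
  rcases Nat.even_or_odd i with h | h
  · rw [h.neg_one_pow]; simp
  · rw [h.neg_one_pow]; simp

lemma expPow_zero {k : ℕ} (hk : k ≠ 0) : expPow (R := R) k 0 = 1 := by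
  ext n
  simp only [expPow, PowerSeries.coeff_mk, PowerSeries.coeff_one]
  rcases Nat.eq_zero_or_pos n with rfl | hn
  · simp [Nat.factorial]
  · have : n ≠ 0 := hn.ne'
    rw [if_neg this]
    by_cases h : k ∣ n
    · rw [if_pos h]
      have : n / k ≠ 0 := by
        obtain ⟨q, rfl⟩ := h
        have : q ≠ 0 := by rintro rfl; simp at hn
        rw [Nat.mul_div_cancel_left _ (Nat.pos_of_ne_zero hk)]
        exact this
      rw [zero_pow this, mul_zero]
    · rw [if_neg h]

lemma expPow_mul {k : ℕ} (hk : k ≠ 0) {c d : R} (h : Commute c d) :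
    expPow k c * expPow k d = expPow k (c + d) := by
  ext n
  rw [PowerSeries.coeff_mul]
  simp only [expPow, PowerSeries.coeff_mk]
  by_cases hn : k ∣ n
  · obtain ⟨q, rfl⟩ := hn
    rw [if_pos ⟨q, rfl⟩, Nat.mul_div_cancel_left _ (Nat.pos_of_ne_zero hk)]
    rw [Finset.Nat.sum_antidiagonal_eq_sum_range_succ_mk]
    have step1 : ∀ i ∈ Finset.range (k * q + 1),
        (if k ∣ i then algebraMap ℚ R (((i / k).factorial : ℚ)⁻¹) * c ^ (i / k) else 0) *
          (if k ∣ (k * q - i) then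
            algebraMap ℚ R ((((k * q - i) / k).factorial : ℚ)⁻¹) * d ^ ((k * q - i) / k) else 0)
        = if k ∣ i then
            (algebraMap ℚ R (((i / k).factorial : ℚ)⁻¹) * c ^ (i / k)) *
              (algebraMap ℚ R (((q - i / k).factorial : ℚ)⁻¹) * d ^ (q - i / k)) else 0 := by
      intro i hi
      by_cases hki : k ∣ i
      · obtain ⟨a, rfl⟩ := hki
        have ha : a ≤ q := by
          have := Finset.mem_range.mp hi
          exact Nat.le_of_mul_le_mul_left (by omega) (Nat.pos_of_ne_zero hk)
        have h1 : k * q - k * a = k * (q - a) := by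
          rw [Nat.mul_sub]
        rw [if_pos ⟨a, rfl⟩, h1, if_pos ⟨q - a, rfl⟩, if_pos ⟨a, rfl⟩,
          Nat.mul_div_cancel_left _ (Nat.pos_of_ne_zero hk),
          Nat.mul_div_cancel_left _ (Nat.pos_of_ne_zero hk)]
      · rw [if_neg hki, if_neg hki, zero_mul]
    rw [Finset.sum_congr rfl step1, ← Finset.sum_filter]
    rw [Finset.sum_nbij' (i := fun i => i / k) (j := fun a => k * a)
      (t := Finset.range (q + 1))
      (g := fun a => (algebraMap ℚ R ((a.factorial : ℚ)⁻¹) * c ^ a) *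
        (algebraMap ℚ R (((q - a).factorial : ℚ)⁻¹) * d ^ (q - a)))]
    · rw [h.add_pow, Finset.mul_sum]
      refine Finset.sum_congr rfl fun a ha => ?_
      have haq : a ≤ q := Nat.lt_succ_iff.mp (Finset.mem_range.mp ha)
      have hfact : ((a.factorial : ℚ))⁻¹ * (((q - a).factorial : ℚ))⁻¹
          = ((q.factorial : ℚ))⁻¹ * (q.choose a : ℚ) := by
        have hn := Nat.choose_mul_factorial_mul_factorial haq
        have h1 : (a.factorial : ℚ) ≠ 0 := Nat.cast_ne_zero.mpr a.factorial_ne_zero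
        have h2 : ((q - a).factorial : ℚ) ≠ 0 := Nat.cast_ne_zero.mpr (q - a).factorial_ne_zero
        have h3 : (q.factorial : ℚ) ≠ 0 := Nat.cast_ne_zero.mpr q.factorial_ne_zero
        field_simp
        push_cast [← hn]
        ring
      calc algebraMap ℚ R ((a.factorial : ℚ)⁻¹) * c ^ a *
            (algebraMap ℚ R (((q - a).factorial : ℚ)⁻¹) * d ^ (q - a))
          = algebraMap ℚ R ((a.factorial : ℚ)⁻¹ * ((q - a).factorial : ℚ)⁻¹) *
            (c ^ a * d ^ (q - a)) := by
            rw [map_mul, ← mul_assoc, mul_assoc _ (c ^ a), algC, ← mul_assoc, ← mul_assoc]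
        _ = algebraMap ℚ R ((q.factorial : ℚ)⁻¹) * (c ^ a * d ^ (q - a) * (q.choose a : R)) := by
            rw [hfact, map_mul, mul_assoc]
            congr 1
            rw [← map_natCast (algebraMap ℚ R) (q.choose a), algC, ← mul_assoc]
    · intro i hi
      simp only [Finset.mem_filter, Finset.mem_range] at hi
      obtain ⟨hilt, ⟨a, rfl⟩⟩ := hi
      rw [Nat.mul_div_cancel_left _ (Nat.pos_of_ne_zero hk)]
      exact Finset.mem_range.mpr (Nat.lt_succ_of_le
        (Nat.le_of_mul_le_mul_left (by omega) (Nat.pos_of_ne_zero hk)))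
    · intro a ha
      simp only [Finset.mem_filter, Finset.mem_range]
      have := Nat.lt_succ_iff.mp (Finset.mem_range.mp ha)
      exact ⟨by have := Nat.mul_le_mul_left k this; omega, ⟨a, rfl⟩⟩
    · intro i hi
      simp only [Finset.mem_filter] at hi
      exact Nat.mul_div_cancel' hi.2
    · intro a ha
      exact Nat.mul_div_cancel_left _ (Nat.pos_of_ne_zero hk)
    · intro i hi
      rfl
  · rw [if_neg hn]
    refine Finset.sum_eq_zero fun p hp => ?_
    have hsum := Finset.HasAntidiagonal.mem_antidiagonal.mp hp
    by_cases h1 : k ∣ p.1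
    · have h2 : ¬ k ∣ p.2 := fun h2 => hn (hsum ▸ h1.add h2)
      rw [if_neg h2, mul_zero]
    · rw [if_neg h1, zero_mul]

lemma coeff_expPow_self {k : ℕ} (hk : k ≠ 0) (c : R) :
    PowerSeries.coeff k (expPow k c) = c := by
  simp [expPow, Nat.div_self (Nat.pos_of_ne_zero hk), Nat.factorial]

lemma negSub_one : negSub (1 : PowerSeries R) = 1 := by
  ext n
  simp only [negSub, PowerSeries.coeff_mk, PowerSeries.coeff_one]
  rcases Nat.eq_zero_or_pos n with rfl | hn
  · simp
  · simp [hn.ne']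

lemma negSub_mul (f g : PowerSeries R) : negSub (f * g) = negSub f * negSub g := by
  ext n
  simp only [negSub, PowerSeries.coeff_mk, PowerSeries.coeff_mul, Finset.mul_sum]
  refine Finset.sum_congr rfl fun p hp => ?_
  have hsum := Finset.HasAntidiagonal.mem_antidiagonal.mp hp
  rw [← hsum, pow_add]
  rcases Nat.even_or_odd p.1 with h1 | h1 <;> rcases Nat.even_or_odd p.2 with h2 | h2 <;>
    simp [h1.neg_one_pow, h2.neg_one_pow, mul_neg, neg_mul]

lemma negSub_expPow (k : ℕ) (c : R) :
    negSub (expPow k c) = expPow k ((-1 : R) ^ k * c) := by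
  ext n
  simp only [negSub, expPow, PowerSeries.coeff_mk]
  by_cases h : k ∣ n
  · obtain ⟨q, rfl⟩ := h
    rw [if_pos ⟨q, rfl⟩, if_pos ⟨q, rfl⟩]
    have hcomm : Commute ((-1 : R) ^ k) c := negOnePowC k c
    rw [hcomm.mul_pow, ← pow_mul, Nat.mul_div_cancel' (⟨q, rfl⟩ : k ∣ k * q), ← mul_assoc,
      negOnePowC, mul_assoc]
  · rw [if_neg h, if_neg h, mul_zero]

lemma zassUp_succ (ζ : ℕ → R) (N : ℕ) :
    zassUp ζ (N + 1) = zassUp ζ N * expPow (N + 1) (ζ (N + 1)) := by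
  simp [zassUp, List.range_succ]

lemma zassDown_succ (ζ : ℕ → R) (N : ℕ) :
    zassDown ζ (N + 1) = expPow (N + 1) (ζ (N + 1)) * zassDown ζ N := by
  simp [zassDown, List.range_succ]

lemma negSub_zassUp (ζ : ℕ → R) (N : ℕ) :
    negSub (zassUp ζ N) = zassUp (fun k => (-1 : R) ^ k * ζ k) N := by
  induction N with
  | zero => simp [zassUp, negSub_one]
  | succ N ih => rw [zassUp_succ, negSub_mul, ih, negSub_expPow, zassUp_succ]

lemma negSub_zassDown (ζ : ℕ → R) (N : ℕ) :
    negSub (zassDown ζ N) = zassDown (fun k => (-1 : R) ^ k * ζ k) N := by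
  induction N with
  | zero => simp [zassDown, negSub_one]
  | succ N ih => rw [zassDown_succ, negSub_mul, ih, negSub_expPow, zassDown_succ]

lemma tele1 (η θ : ℕ → R) (N : ℕ)
    (H : ∀ k, 1 ≤ k → k ≤ N → expPow k (η k) * expPow k (θ k) = 1) :
    zassDown η N * zassUp θ N = 1 := by
  induction N with
  | zero => simp [zassUp, zassDown]
  | succ N ih =>
    rw [zassUp_succ, zassDown_succ, mul_assoc, ← mul_assoc (zassDown η N),
      ih (fun k h1 h2 => H k h1 (h2.trans (Nat.le_succ N))), one_mul,
      H (N + 1) (by omega) le_rfl]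

lemma tele2 (η θ : ℕ → R) (N : ℕ)
    (H : ∀ k, 1 ≤ k → k ≤ N → expPow k (η k) * expPow k (θ k) = 1) :
    zassDown η (N + 1) * zassUp θ (N + 1)
      = expPow (N + 1) (η (N + 1)) * expPow (N + 1) (θ (N + 1)) := by
  rw [zassUp_succ, zassDown_succ, mul_assoc, ← mul_assoc (zassDown η N), tele1 η θ N H,
    one_mul]

lemma coeff_mul_congr {N : ℕ} {f f' g g' : PowerSeries R}
    (hf : ∀ n ≤ N, PowerSeries.coeff n f = PowerSeries.coeff n f')
    (hg : ∀ n ≤ N, PowerSeries.coeff n g = PowerSeries.coeff n g') :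
    ∀ n ≤ N, PowerSeries.coeff n (f * g) = PowerSeries.coeff n (f' * g') := by
  intro n hn
  rw [PowerSeries.coeff_mul, PowerSeries.coeff_mul]
  refine Finset.sum_congr rfl fun p hp => ?_
  have hsum := Finset.HasAntidiagonal.mem_antidiagonal.mp hp
  rw [hf p.1 (by omega), hg p.2 (by omega)]

end

/-- Let `P = (exp ζ₁ exp ζ₂ ⋯)(⋯ exp ζ₂ exp ζ₁)` (a coefficientwise limit of
partial products).  If the sign involution sends `P` to `P⁻¹`, then
`ζ_{2m} = 0` for all `m ≥ 1`. -/
theorem stmt_6 (R : Type*) [Ring R] [Algebra ℚ R] (ζ : ℕ → R) (P : PowerSeries R)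
    (hP : ∀ n N : ℕ, n ≤ N →
      PowerSeries.coeff n (zassUp ζ N * zassDown ζ N) = PowerSeries.coeff n P)
    (h1 : negSub P * P = 1) (h2 : P * negSub P = 1) :
    ∀ m : ℕ, 1 ≤ m → ζ (2 * m) = 0 := by
  intro m
  induction m using Nat.strong_induction_on with
  | _ m ih =>
    intro hm
    set N := 2 * m with hNdef
    have hN0 : N ≠ 0 := by omega
    obtain ⟨M, hM⟩ : ∃ M, N = M + 1 := ⟨N - 1, by omega⟩
    set ζ' : ℕ → R := fun k => (-1 : R) ^ k * ζ k with hζ'def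
    have hζ'N : ζ' N = ζ N := by
      have hev : Even N := ⟨m, by omega⟩
      simp [hζ'def, hev.neg_one_pow]
    have hsum0 : ∀ k, 1 ≤ k → k < N → ζ' k + ζ k = 0 := by
      intro k hk1 hkN
      rcases Nat.even_or_odd k with he | ho
      · obtain ⟨j, hj⟩ := he
        have h2j : k = 2 * j := by omega
        have hz : ζ k = 0 := by rw [h2j]; exact ih j (by omega) (by omega)
        simp [hζ'def, hz]
      · simp [hζ'def, ho.neg_one_pow]
    have hcommζ : ∀ k, Commute (ζ' k) (ζ k) := fun k =>
      Commute.mul_left (negOnePowC k (ζ k)) (Commute.refl (ζ k))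
    have hpair : ∀ k, 1 ≤ k → k < N → expPow k (ζ' k) * expPow k (ζ k) = 1 := by
      intro k hk1 hkN
      rw [expPow_mul (by omega) (hcommζ k), hsum0 k hk1 hkN, expPow_zero (by omega)]
    have hser : negSub (zassUp ζ N * zassDown ζ N) = zassUp ζ' N * zassDown ζ' N := by
      rw [negSub_mul, negSub_zassUp, negSub_zassDown, ← hζ'def]
    have hfP : ∀ n ≤ N, PowerSeries.coeff n (zassUp ζ' N * zassDown ζ' N)
        = PowerSeries.coeff n (negSub P) := by
      intro n hn
      rw [← hser]
      simp only [negSub, PowerSeries.coeff_mk]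
      rw [hP n N hn]
    have hgP : ∀ n ≤ N, PowerSeries.coeff n (zassUp ζ N * zassDown ζ N)
        = PowerSeries.coeff n P := fun n hn => hP n N hn
    have h1' : ∀ n ≤ N, PowerSeries.coeff n
        ((zassUp ζ' N * zassDown ζ' N) * (zassUp ζ N * zassDown ζ N))
        = PowerSeries.coeff n (1 : PowerSeries R) := by
      intro n hn
      rw [coeff_mul_congr hfP hgP n hn, h1]
    have hmid : zassDown ζ' N * zassUp ζ N = expPow N (ζ N + ζ N) := by
      rw [hM, tele2 ζ' ζ M (fun k h1 h2 => hpair k h1 (by omega)), ← hM, hζ'N,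
        expPow_mul hN0 (Commute.refl (ζ N))]
    have hassoc : (zassUp ζ' N * zassDown ζ' N) * (zassUp ζ N * zassDown ζ N)
        = zassUp ζ' N * (expPow N (ζ N + ζ N) * zassDown ζ N) := by
      rw [mul_assoc, ← mul_assoc (zassDown ζ' N), hmid]
    have hX : ∀ n ≤ N, PowerSeries.coeff n
        (zassUp ζ' N * (expPow N (ζ N + ζ N) * zassDown ζ N))
        = PowerSeries.coeff n (1 : PowerSeries R) := by
      intro n hn
      rw [← hassoc]
      exact h1' n hn
    have hLU : zassDown (fun k => -ζ' k) N * zassUp ζ' N = 1 := by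
      apply tele1
      intro k hk1 hk2
      rw [expPow_mul (by omega) (Commute.refl (ζ' k)).neg_left, neg_add_cancel,
        expPow_zero (by omega)]
    have hDR : zassDown ζ N * zassUp (fun k => -ζ k) N = 1 := by
      apply tele1
      intro k hk1 hk2
      rw [expPow_mul (by omega) (Commute.refl (ζ k)).neg_right, add_neg_cancel,
        expPow_zero (by omega)]
    have hLR : zassDown (fun k => -ζ' k) N * zassUp (fun k => -ζ k) N
        = expPow N (-(ζ N + ζ N)) := by
      have Hp : ∀ k, 1 ≤ k → k ≤ M → expPow k (-ζ' k) * expPow k (-ζ k) = 1 := by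
        intro k hk1 hk2
        rw [expPow_mul (by omega) ((hcommζ k).neg_left.neg_right)]
        have hz : -ζ' k + -ζ k = 0 := by
          rw [← neg_add, hsum0 k hk1 (by omega), neg_zero]
        rw [hz, expPow_zero (by omega)]
      rw [hM, tele2 (fun k => -ζ' k) (fun k => -ζ k) M Hp, ← hM, hζ'N,
        expPow_mul hN0 ((Commute.refl (ζ N)).neg_left.neg_right), neg_add]
    have hkey : ∀ n ≤ N, PowerSeries.coeff n
        ((zassDown (fun k => -ζ' k) N *
          (zassUp ζ' N * (expPow N (ζ N + ζ N) * zassDown ζ N))) *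
          zassUp (fun k => -ζ k) N)
        = PowerSeries.coeff n
          ((zassDown (fun k => -ζ' k) N * (1 : PowerSeries R)) *
            zassUp (fun k => -ζ k) N) :=
      coeff_mul_congr (coeff_mul_congr (fun _ _ => rfl) hX) (fun _ _ => rfl)
    have hleft : (zassDown (fun k => -ζ' k) N *
          (zassUp ζ' N * (expPow N (ζ N + ζ N) * zassDown ζ N))) *
          zassUp (fun k => -ζ k) N = expPow N (ζ N + ζ N) := by
      simp only [← mul_assoc]
      rw [hLU, one_mul, mul_assoc, hDR, mul_one]
    have hright : (zassDown (fun k => -ζ' k) N * (1 : PowerSeries R)) *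
          zassUp (fun k => -ζ k) N = expPow N (-(ζ N + ζ N)) := by
      rw [mul_one, hLR]
    have hfinal : ζ N + ζ N = -(ζ N + ζ N) := by
      have h := hkey N le_rfl
      rw [hleft, hright, coeff_expPow_self hN0, coeff_expPow_self hN0] at h
      exact h
    have hzero : ζ N + ζ N + (ζ N + ζ N) = 0 := by
      have h : ζ N + ζ N + (ζ N + ζ N) = -(ζ N + ζ N) + (ζ N + ζ N) := by rw [← hfinal]
      rw [neg_add_cancel] at h
      exact h
    have h4 : (4 : ℚ) • ζ N = 0 := by
      calc (4 : ℚ) • ζ N = ζ N + ζ N + (ζ N + ζ N) := by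
            rw [show (4 : ℚ) = 1 + 1 + (1 + 1) by norm_num, add_smul, add_smul, one_smul]
        _ = 0 := hzero
    calc ζ N = (4 : ℚ)⁻¹ • ((4 : ℚ) • ζ N) := by rw [smul_smul]; norm_num
      _ = 0 := by rw [h4, smul_zero]
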